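/- arXiv:math/0311492 — 4 statements merged into one kernel-verified Lean document; each statement's English description precedes it below -/
import Mathlib

section
/- Let H be a Hopf algebra over a commutative ring R whose antipode S is bijective, and let μ : H^e = H ⊗_R H^op → H be the R-linear map μ(a ⊗ b°) = ab. Then μ is surjective, and its kernel equals the left ideal of H^e generated by the set E(ker ε) = { E(x) : x ∈ H, ε(x) = 0 }; that is, ker μ = H^e·E(ker ε) as R-submodules of H^e. (This is the algebraic form of the isomorphism H^e_E ⊗_H R ≅ H of left H^e-modules, where H^e is a right H-module via E and R a left H-module via ε.) -/
open TensorProduct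

/-- `E : H → H^e = H ⊗[R] Hᵐᵒᵖ`, `E(c) = Σ c₍₁₎ ⊗ (S(c₍₂₎))°`. -/
noncomputable def hopfE (R : Type*) (H : Type*) [CommRing R] [Ring H]
    [HopfAlgebra R H] : H →ₗ[R] H ⊗[R] Hᵐᵒᵖ :=
  (TensorProduct.map LinearMap.id
      ((MulOpposite.opLinearEquiv R).toLinearMap ∘ₗ HopfAlgebra.antipode (R := R) (A := H))) ∘ₗ
    (Coalgebra.comul (R := R) (A := H))

/-- `μ : H^e = H ⊗[R] Hᵐᵒᵖ → H`, `μ(a ⊗ b°) = a·b`. -/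
noncomputable def hopfMu (R : Type*) (H : Type*) [CommRing R] [Ring H]
    [HopfAlgebra R H] : H ⊗[R] Hᵐᵒᵖ →ₗ[R] H :=
  (LinearMap.mul' R H) ∘ₗ
    (TensorProduct.map LinearMap.id (MulOpposite.opLinearEquiv R).symm.toLinearMap)

section Aux

variable {R H : Type*} [CommRing R] [Ring H] [HopfAlgebra R H]

local notation "S" => HopfAlgebra.antipode (R := R) (A := H)

lemma hopf_antipode_one : (S) (1 : H) = 1 := by
  have h := HopfAlgebra.mul_antipode_rTensor_comul_apply (R := R) (A := H) (a := 1)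
  simpa [Algebra.TensorProduct.one_def] using h

lemma hopfMu_tmul (a : H) (d : Hᵐᵒᵖ) : hopfMu R H (a ⊗ₜ[R] d) = a * d.unop := by
  simp [hopfMu]

lemma hopfE_repr (y : H) (r : Coalgebra.Repr R y (H × H)) :
    hopfE R H y = ∑ j ∈ r.index, r.left j ⊗ₜ[R] MulOpposite.op ((S) (r.right j)) := by
  rw [hopfE, LinearMap.comp_apply, ← r.eq, map_sum]
  simp

lemma hopfMu_hopfE (y : H) :
    hopfMu R H (hopfE R H y) = algebraMap R H (Coalgebra.counit y) := by
  have r := Coalgebra.Repr.arbitrary R y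
  rw [hopfE_repr y r, map_sum]
  simp only [hopfMu_tmul, MulOpposite.unop_op]
  exact HopfAlgebra.sum_mul_antipode_eq_algebraMap_counit r

lemma hopfMu_mul_tmul (a : H) (b : Hᵐᵒᵖ) (y : H ⊗[R] Hᵐᵒᵖ) :
    hopfMu R H ((a ⊗ₜ[R] b) * y) = a * hopfMu R H y * b.unop := by
  induction y using TensorProduct.induction_on with
  | zero => simp
  | tmul c d => simp [Algebra.TensorProduct.tmul_mul_tmul, hopfMu_tmul, mul_assoc]
  | add x y hx hy => simp [mul_add, map_add, hx, hy, mul_add, add_mul]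

lemma hopfMu_mul (z y : H ⊗[R] Hᵐᵒᵖ) (hy : hopfMu R H y = 0) :
    hopfMu R H (z * y) = 0 := by
  induction z using TensorProduct.induction_on with
  | zero => simp
  | tmul a b => rw [hopfMu_mul_tmul, hy, mul_zero, zero_mul]
  | add x y hx hy' => rw [add_mul, map_add, hx, hy', add_zero]

/-- the key lemma: `1 ⊗ S(c)° ≡ S(c) ⊗ 1` modulo the ideal. -/
lemma hopf_key (c : H) :
    (1 : H) ⊗ₜ[R] MulOpposite.op ((S) c) - (S) c ⊗ₜ[R] (1 : Hᵐᵒᵖ) ∈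
      Ideal.span (hopfE R H '' {x : H | Coalgebra.counit (R := R) x = 0}) := by
  classical
  set opS : H →ₗ[R] Hᵐᵒᵖ :=
    (MulOpposite.opLinearEquiv R).toLinearMap ∘ₗ HopfAlgebra.antipode (R := R) (A := H) with hopS
  set ψ : H ⊗[R] H →ₗ[R] H :=
    (LinearMap.mul' R H) ∘ₗ (LinearMap.rTensor H (HopfAlgebra.antipode (R := R) (A := H)))
    with hψ
  set Φ : H ⊗[R] (H ⊗[R] H) →ₗ[R] H ⊗[R] Hᵐᵒᵖ :=
    (TensorProduct.map ψ opS) ∘ₗ (TensorProduct.assoc R H H H).symm.toLinearMap with hΦdef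
  have hΦ : ∀ x y z : H, Φ (x ⊗ₜ (y ⊗ₜ z)) = ((S) x * y) ⊗ₜ MulOpposite.op ((S) z) := by
    intro x y z
    simp [hΦdef, hψ, hopS]
  set r := Coalgebra.Repr.arbitrary R c with hr
  set ra : ∀ i, Coalgebra.Repr R (r.left i) (H × H) := fun i => Coalgebra.Repr.arbitrary R _ with hra
  set rb : ∀ i, Coalgebra.Repr R (r.right i) (H × H) := fun i => Coalgebra.Repr.arbitrary R _ with hrb
  have hco := congrArg Φ (Coalgebra.sum_tmul_tmul_eq r ra rb)
  rw [map_sum, map_sum] at hco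
  simp only [map_sum, hΦ] at hco
  -- left side of hco equals 1 ⊗ op (S c)
  have hleft : ∀ i ∈ r.index,
      ∑ j ∈ (ra i).index, ((S) ((ra i).left j) * (ra i).right j) ⊗ₜ[R]
          MulOpposite.op ((S) (r.right i))
        = algebraMap R H (Coalgebra.counit (r.left i)) ⊗ₜ[R]
            MulOpposite.op ((S) (r.right i)) := by
    intro i _
    rw [← TensorProduct.sum_tmul, HopfAlgebra.sum_antipode_mul_eq_algebraMap_counit (ra i)]
  rw [Finset.sum_congr rfl hleft] at hco
  have h1 : ∑ i ∈ r.index,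
      algebraMap R H (Coalgebra.counit (r.left i)) ⊗ₜ[R] MulOpposite.op ((S) (r.right i))
        = (1 : H) ⊗ₜ[R] MulOpposite.op ((S) c) := by
    have h := Coalgebra.sum_counit_tmul_map_eq (R := R) (f := opS) c (repr := r)
    have h2 := congrArg (TensorProduct.map (Algebra.linearMap R H) (LinearMap.id (M := Hᵐᵒᵖ))) h
    rw [map_sum] at h2
    simpa [hopS] using h2
  rw [h1] at hco
  -- second claim : ∑ ε(rᵢ) • (S lᵢ ⊗ 1) = S c ⊗ 1
  have h2 : ∑ i ∈ r.index,
      Coalgebra.counit (R := R) (r.right i) • ((S) (r.left i) ⊗ₜ[R] (1 : Hᵐᵒᵖ))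
        = (S) c ⊗ₜ[R] (1 : Hᵐᵒᵖ) := by
    have h := Coalgebra.sum_map_tmul_counit_eq (R := R)
      (f := HopfAlgebra.antipode (R := R) (A := H)) c (repr := r)
    have h2 := congrArg
      (TensorProduct.map (LinearMap.id (M := H)) (Algebra.linearMap R Hᵐᵒᵖ)) h
    rw [map_sum] at h2
    simpa [Algebra.algebraMap_eq_smul_one] using h2
  -- hopfE 1 = 1 ⊗ 1
  have hE1 : hopfE R H (1 : H) = (1 : H) ⊗ₜ[R] (1 : Hᵐᵒᵖ) := by
    rw [hopfE, LinearMap.comp_apply, Bialgebra.comul_one, Algebra.TensorProduct.one_def]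
    simp [hopf_antipode_one]
  -- the main identity
  have main : (1 : H) ⊗ₜ[R] MulOpposite.op ((S) c) - (S) c ⊗ₜ[R] (1 : Hᵐᵒᵖ)
      = ∑ i ∈ r.index, ((S) (r.left i) ⊗ₜ[R] (1 : Hᵐᵒᵖ)) *
          hopfE R H (r.right i - Coalgebra.counit (R := R) (r.right i) • 1) := by
    have expand : ∀ i ∈ r.index,
        ((S) (r.left i) ⊗ₜ[R] (1 : Hᵐᵒᵖ)) *
            hopfE R H (r.right i - Coalgebra.counit (R := R) (r.right i) • 1)
          = (∑ j ∈ (rb i).index, ((S) (r.left i) * (rb i).left j) ⊗ₜ[R]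
              MulOpposite.op ((S) ((rb i).right j)))
            - Coalgebra.counit (R := R) (r.right i) • ((S) (r.left i) ⊗ₜ[R] (1 : Hᵐᵒᵖ)) := by
      intro i _
      rw [map_sub, map_smul, hE1, mul_sub, hopfE_repr _ (rb i), Finset.mul_sum]
      congr 1
      · exact Finset.sum_congr rfl fun j _ => by
          simp [Algebra.TensorProduct.tmul_mul_tmul]
      · simp [mul_smul_comm, Algebra.TensorProduct.tmul_mul_tmul]
    rw [Finset.sum_congr rfl expand, Finset.sum_sub_distrib, ← hco, h2]
  rw [main]
  refine Submodule.sum_mem _ fun i _ => Ideal.mul_mem_left _ _ (Ideal.subset_span ?_)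
  refine ⟨r.right i - Coalgebra.counit (R := R) (r.right i) • 1, ?_, rfl⟩
  simp [Set.mem_setOf_eq, smul_eq_mul]

lemma hopf_sub_mem (z : H ⊗[R] Hᵐᵒᵖ)
    (hS : Function.Surjective (HopfAlgebra.antipode (R := R) (A := H))) :
    z - hopfMu R H z ⊗ₜ[R] (1 : Hᵐᵒᵖ) ∈
      Ideal.span (hopfE R H '' {x : H | Coalgebra.counit (R := R) x = 0}) := by
  induction z using TensorProduct.induction_on with
  | zero => simp
  | tmul a d =>
    obtain ⟨c, hc⟩ := hS d.unop
    have hd : d = MulOpposite.op ((S) c) := by rw [hc, MulOpposite.op_unop]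
    rw [hopfMu_tmul, hd]
    have heq : a ⊗ₜ[R] MulOpposite.op ((S) c) - (a * (MulOpposite.op ((S) c)).unop) ⊗ₜ[R]
        (1 : Hᵐᵒᵖ) = (a ⊗ₜ[R] (1 : Hᵐᵒᵖ)) *
          ((1 : H) ⊗ₜ[R] MulOpposite.op ((S) c) - (S) c ⊗ₜ[R] (1 : Hᵐᵒᵖ)) := by
      rw [mul_sub]
      simp [Algebra.TensorProduct.tmul_mul_tmul]
    rw [heq]
    exact Ideal.mul_mem_left _ _ (hopf_key c)
  | add x y hx hy =>
    have : x + y - hopfMu R H (x + y) ⊗ₜ[R] (1 : Hᵐᵒᵖ)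
        = (x - hopfMu R H x ⊗ₜ[R] (1 : Hᵐᵒᵖ)) + (y - hopfMu R H y ⊗ₜ[R] (1 : Hᵐᵒᵖ)) := by
      rw [map_add, add_tmul]; abel
    rw [this]
    exact Submodule.add_mem _ hx hy

end Aux

/-- Let `H` be a Hopf algebra over a commutative ring `R` whose antipode is
bijective, and let `μ : H^e = H ⊗[R] Hᵐᵒᵖ → H` be `μ(a ⊗ b°) = ab`.  Then `μ` is surjective
and its kernel is the left ideal of `H^e` generated by `E(ker ε)`; equality being an equality
of `R`-submodules of `H^e`.  (Algebraic form of `H^e_E ⊗_H R ≅ H`.) -/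
theorem stmt3 (R : Type*) (H : Type*) [CommRing R] [Ring H] [HopfAlgebra R H]
    (hS : Function.Bijective (HopfAlgebra.antipode (R := R) (A := H))) :
    Function.Surjective (hopfMu R H) ∧
    LinearMap.ker (hopfMu R H) =
      Submodule.restrictScalars R
        (Ideal.span (hopfE R H '' {x : H | Coalgebra.counit (R := R) x = 0})) := by
  constructor
  · intro h
    exact ⟨h ⊗ₜ[R] (1 : Hᵐᵒᵖ), by simp [hopfMu_tmul]⟩
  · apply le_antisymm
    · intro x hx
      rw [LinearMap.mem_ker] at hx
      rw [Submodule.restrictScalars_mem]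
      have := hopf_sub_mem x hS.surjective
      rwa [hx, TensorProduct.zero_tmul, sub_zero] at this
    · intro x hx
      rw [Submodule.restrictScalars_mem] at hx
      rw [LinearMap.mem_ker]
      induction hx using Submodule.span_induction with
      | mem g hg =>
        obtain ⟨y, hy, rfl⟩ := hg
        rw [hopfMu_hopfE, hy, map_zero]
      | zero => simp
      | add x y _ _ hx hy => rw [map_add, hx, hy, add_zero]
      | smul z x _ hx => rw [smul_eq_mul]; exact hopfMu_mul z x hx
end

section
/- Let A be a commutative unital topological ℂ-algebra (a topological ring with continuous ℂ-scalar multiplication). Suppose there exist elements x₁,…,xₙ ∈ A generating a dense subalgebra of A, and continuous ℂ-linear derivations ∂₁,…,∂ₙ : A → A with ∂ᵢ(xⱼ) = δᵢⱼ for all i,j. Let ∂ : A → Aⁿ be the derivation ∂(a) = (∂₁a,…,∂ₙa), where Aⁿ carries the product topology and the componentwise A-module structure. Then ∂ is a universal continuous derivation: for every topological A-module M which is Hausdorff, with continuous addition and continuous scalar multiplication A × M → M, and for every continuous ℂ-linear derivation D : A → M, there exists a unique A-linear map φ : Aⁿ → M with φ ∘ ∂ = D; moreover this φ is continuous. -/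
/-- Let `A` be a commutative unital topological `ℂ`-algebra.  Suppose
`x₁, …, xₙ ∈ A` generate a dense subalgebra and `∂₁, …, ∂ₙ : A → A` are continuous `ℂ`-linear
derivations with `∂ᵢ(xⱼ) = δᵢⱼ`.  Then `∂ = (∂₁, …, ∂ₙ) : A → Aⁿ` is a universal continuous
derivation: for every Hausdorff topological `A`-module `M` (with continuous addition and
continuous scalar multiplication) and every continuous `ℂ`-linear derivation `D : A → M`
there is a unique `A`-linear map `φ : Aⁿ → M` with `φ ∘ ∂ = D`, and this `φ` is continuous. -/
theorem stmt6 (A : Type*) [CommRing A] [Algebra ℂ A] [TopologicalSpace A]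
    [IsTopologicalRing A] [ContinuousSMul ℂ A]
    (n : ℕ) (x : Fin n → A) (del : Fin n → Derivation ℂ A A)
    (hdense : Dense ((Algebra.adjoin ℂ (Set.range x) : Subalgebra ℂ A) : Set A))
    (hcont : ∀ i, Continuous (del i))
    (hdelta : ∀ i j, del i (x j) = if i = j then 1 else 0)
    (M : Type*) [AddCommGroup M] [Module A M] [Module ℂ M] [IsScalarTower ℂ A M]
    [TopologicalSpace M] [T2Space M] [ContinuousAdd M] [ContinuousSMul A M]
    (D : Derivation ℂ A M) (hD : Continuous D) :
    ∃ φ : (Fin n → A) →ₗ[A] M,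
      (∀ a : A, φ (fun i => del i a) = D a) ∧ Continuous φ ∧
      ∀ ψ : (Fin n → A) →ₗ[A] M, (∀ a : A, ψ (fun i => del i a) = D a) → ψ = φ := by

  classical
  refine ⟨{ toFun := fun v => ∑ i, v i • D (x i)
            map_add' := by
              intro u v
              simp [add_smul, Finset.sum_add_distrib]
            map_smul' := by
              intro c v
              simp [mul_smul, Finset.smul_sum] }, ?_, ?_, ?_⟩
  · -- φ ∘ ∂ = D
    have hclosed : IsClosed {a : A | (∑ i, del i a • D (x i)) = D a} := by
      apply isClosed_eq
      · exact continuous_finset_sum _ fun i _ => (hcont i).smul continuous_const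
      · exact hD
    have hsub : ((Algebra.adjoin ℂ (Set.range x) : Subalgebra ℂ A) : Set A) ⊆
        {a : A | (∑ i, del i a • D (x i)) = D a} := by
      intro a ha
      induction ha using Algebra.adjoin_induction with
      | mem b hb =>
        obtain ⟨j, rfl⟩ := hb
        simp [hdelta, ite_smul]
      | algebraMap r => simp
      | add a b ha hb iha ihb =>
        simp only [Set.mem_setOf_eq] at *
        simp [add_smul, Finset.sum_add_distrib, iha, ihb]
      | mul a b ha hb iha ihb =>
        simp only [Set.mem_setOf_eq] at *
        simp only [Derivation.leibniz, add_smul, smul_eq_mul, mul_smul,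
          Finset.sum_add_distrib, ← Finset.smul_sum, iha, ihb]
    have hall : ∀ a : A, (∑ i, del i a • D (x i)) = D a := by
      intro a
      have := hclosed.closure_subset_iff.mpr hsub
      have h2 : a ∈ closure ((Algebra.adjoin ℂ (Set.range x) : Subalgebra ℂ A) : Set A) :=
        hdense a
      exact this h2
    exact fun a => hall a
  · -- continuity
    show Continuous fun v : Fin n → A => ∑ i, v i • D (x i)
    exact continuous_finset_sum _ fun i _ => (continuous_apply i).smul continuous_const
  · -- uniqueness
    intro ψ hψ
    refine Module.Basis.ext (Pi.basisFun A (Fin n)) fun j => ?_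
    have h1 : ((Pi.basisFun A (Fin n)) j : Fin n → A) = fun i => del i (x j) := by
      funext i
      simp [Pi.basisFun_apply, Pi.single_apply, hdelta, eq_comm]
    rw [h1, hψ (x j)]
    simp [hdelta, ite_smul]
end

section
/- Let A be a unital ℂ-algebra equipped with a decreasing filtration by ℂ-subspaces A = F₀ ⊇ F₁ ⊇ F₂ ⊇ ⋯ such that Fᵢ·Fⱼ ⊆ F_{i+j} for all i, j (so each Fₙ is a two-sided ideal), ⋂ₙ Fₙ = {0}, and each quotient A/Fₙ is finite-dimensional over ℂ. Then submultiplicative seminorms separate the points of A: for every nonzero a ∈ A there exists a seminorm p on the ℂ-vector space A satisfying p(xy) ≤ p(x)·p(y) for all x, y ∈ A, such that p(a) ≠ 0. -/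
/-- Let `A` be a unital `ℂ`-algebra with a decreasing filtration by
`ℂ`-subspaces `A = F₀ ⊇ F₁ ⊇ ⋯` such that `Fᵢ·Fⱼ ⊆ F_{i+j}`, `⋂ₙ Fₙ = {0}`, and every
quotient `A/Fₙ` is finite-dimensional.  Then submultiplicative seminorms separate the points
of `A`: for every `a ≠ 0` there is a seminorm `p` on `A` with `p(xy) ≤ p(x)p(y)` for all
`x, y` and `p(a) ≠ 0`. -/
theorem stmt7 (A : Type*) [Ring A] [Algebra ℂ A]
    (F : ℕ → Submodule ℂ A)
    (hF0 : F 0 = ⊤)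
    (hFdec : ∀ n, F (n + 1) ≤ F n)
    (hFmul : ∀ i j, ∀ a ∈ F i, ∀ b ∈ F j, a * b ∈ F (i + j))
    (hsep : ⨅ n, F n = ⊥)
    (hfin : ∀ n, FiniteDimensional ℂ (A ⧸ F n))
    (a : A) (ha : a ≠ 0) :
    ∃ p : Seminorm ℂ A, (∀ x y : A, p (x * y) ≤ p x * p y) ∧ p a ≠ 0 := by
  -- find `n` with `a ∉ F n`
  have hnot : ¬ a ∈ ⨅ n, F n := by
    rw [hsep]; simpa using ha
  rw [Submodule.mem_iInf] at hnot
  push_neg at hnot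
  obtain ⟨n, hn⟩ := hnot
  -- each element of `A` maps `F n` into itself by left multiplication
  have hstab : ∀ x : A, ∀ b ∈ F n, x * b ∈ F n := by
    intro x b hb
    have hx : x ∈ F 0 := by rw [hF0]; trivial
    simpa using hFmul 0 n x hx b hb
  set V := A ⧸ F n
  haveI : FiniteDimensional ℂ V := hfin n
  -- left multiplication descends to the quotient
  have hle : ∀ x : A, F n ≤ (F n).comap (LinearMap.mulLeft ℂ x) := by
    intro x b hb; exact hstab x b hb
  let L : A → (V →ₗ[ℂ] V) := fun x => (F n).mapQ (F n) (LinearMap.mulLeft ℂ x) (hle x)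
  have hLmk : ∀ x b : A, L x (Submodule.Quotient.mk b) = Submodule.Quotient.mk (x * b) := by
    intro x b; rfl
  -- `L` is linear in `x`
  let L' : A →ₗ[ℂ] (V →ₗ[ℂ] V) :=
    { toFun := L
      map_add' := by
        intro x y
        apply LinearMap.ext
        intro v
        induction v using Submodule.Quotient.induction_on with
        | _ b =>
          simp only [LinearMap.add_apply, hLmk, add_mul]
          rw [← Submodule.Quotient.mk_add]
      map_smul' := by
        intro c x
        apply LinearMap.ext
        intro v
        induction v using Submodule.Quotient.induction_on with
        | _ b =>
          simp only [LinearMap.smul_apply, hLmk, RingHom.id_apply, smul_mul_assoc]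
          rw [← Submodule.Quotient.mk_smul] }
  -- put a norm on `V`
  let d := Module.finrank ℂ V
  let e : V ≃ₗ[ℂ] (Fin d → ℂ) := (Module.finBasis ℂ V).equivFun
  letI : NormedAddCommGroup V := NormedAddCommGroup.induced V (Fin d → ℂ) e.toLinearMap e.injective
  letI : NormedSpace ℂ V := NormedSpace.induced ℂ V (Fin d → ℂ) e.toLinearMap
  haveI : FiniteDimensional ℂ V := hfin n
  -- pass to continuous linear maps
  let Φ : A →ₗ[ℂ] (V →L[ℂ] V) :=
    (LinearMap.toContinuousLinearMap : (V →ₗ[ℂ] V) ≃ₗ[ℂ] (V →L[ℂ] V)).toLinearMap.comp L'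
  have hΦmk : ∀ x b : A, Φ x (Submodule.Quotient.mk b) = Submodule.Quotient.mk (x * b) := by
    intro x b; rfl
  refine ⟨(normSeminorm ℂ (V →L[ℂ] V)).comp Φ, ?_, ?_⟩
  · intro x y
    have hcomp : Φ (x * y) = (Φ x).comp (Φ y) := by
      apply ContinuousLinearMap.ext
      intro v
      induction v using Submodule.Quotient.induction_on with
      | _ b =>
        simp only [ContinuousLinearMap.comp_apply, hΦmk, mul_assoc]
    simp only [Seminorm.comp_apply, coe_normSeminorm, hcomp]
    exact (Φ x).opNorm_comp_le (Φ y)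
  · simp only [Seminorm.comp_apply, coe_normSeminorm, ne_eq, norm_eq_zero]
    intro h0
    have : Φ a (Submodule.Quotient.mk 1) = 0 := by rw [h0]; rfl
    rw [hΦmk, mul_one, Submodule.Quotient.mk_eq_zero] at this
    exact hn this
end

section
/- Let A be a commutative unital topological ℂ-algebra (a topological ring with continuous ℂ-scalar multiplication) which is a local ring, and suppose there is a continuous ℂ-algebra homomorphism ε : A → ℂ whose kernel is the maximal ideal 𝔪 of A. Let 𝔤 be a finite-dimensional complex Lie algebra acting on A by continuous derivations, i.e. there is a Lie algebra homomorphism ρ from 𝔤 into the Lie algebra of ℂ-linear derivations of A such that each ρ(X) : A → A is continuous. Let C¹(𝔤,A) = Hom_ℂ(𝔤, A) with the A-module structure (a·T)(X) = a·T(X), and let d⁰ : A → C¹(𝔤,A) be the derivation (d⁰a)(X) = ρ(X)a. Suppose there exists a ℂ-linear map χ : 𝔤* → A such that (i) the image of χ generates a dense subalgebra of A, and (ii) ρ(X)(χ(ω)) − ω(X)·1 ∈ 𝔪 for every X ∈ 𝔤 and ω ∈ 𝔤*. Then d⁰ is a universal continuous derivation: for every topological A-module M which is Hausdorff, with continuous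 addition and continuous scalar multiplication A × M → M, and for every continuous ℂ-linear derivation D : A → M, there exists a unique A-linear map φ : C¹(𝔤,A) → M with φ ∘ d⁰ = D; moreover this φ is continuous. -/
/-- Given a Lie algebra `𝔤` acting on a commutative algebra `A` by derivations via `ρ`,
this is the derivation `d⁰ : A → C¹(𝔤,A) = Hom_ℂ(𝔤, A)`, `(d⁰a)(X) = ρ(X)a`. -/
def lieD0 {g : Type*} [LieRing g] [LieAlgebra ℂ g]
    {A : Type*} [CommRing A] [Algebra ℂ A]
    (rho : g →ₗ⁅ℂ⁆ Derivation ℂ A A) (a : A) : g →ₗ[ℂ] A where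
  toFun X := rho X a
  map_add' X Y := by simp
  map_smul' c X := by simp

/-- The topology of pointwise convergence on `Hom_ℂ(𝔤, A)`; since `𝔤` is
finite-dimensional this is the natural topology on `C¹(𝔤,A) ≅ Aⁿ`. -/
noncomputable instance linearMapPointwiseTopology {R M N : Type*} [Semiring R]
    [AddCommMonoid M] [Module R M] [AddCommMonoid N] [Module R N] [TopologicalSpace N] :
    TopologicalSpace (M →ₗ[R] N) :=
  TopologicalSpace.induced DFunLike.coe Pi.topologicalSpace

/-- Let `A` be a commutative unital topological `ℂ`-algebra which is a local
ring, with a continuous character `ε : A → ℂ` whose kernel is the maximal ideal `𝔪`.  Let a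
finite-dimensional complex Lie algebra `𝔤` act on `A` by continuous derivations via `ρ`, and
let `d⁰ : A → C¹(𝔤,A) = Hom_ℂ(𝔤,A)` be `(d⁰a)(X) = ρ(X)a`.  If there is a `ℂ`-linear map
`χ : 𝔤* → A` whose image generates a dense subalgebra of `A` and with
`ρ(X)(χ(ω)) − ω(X)·1 ∈ 𝔪` for all `X, ω`, then `d⁰` is a universal continuous derivation:
for every Hausdorff topological `A`-module `M` and every continuous `ℂ`-linear derivation
`D : A → M` there is a unique `A`-linear `φ : C¹(𝔤,A) → M` with `φ ∘ d⁰ = D`, and this `φ`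
is continuous. -/
theorem stmt12 (A : Type*) [CommRing A] [Algebra ℂ A] [TopologicalSpace A]
    [IsTopologicalRing A] [ContinuousSMul ℂ A] [IsLocalRing A]
    (eps : A →ₐ[ℂ] ℂ) (heps : Continuous eps)
    (hker : RingHom.ker (eps : A →+* ℂ) = IsLocalRing.maximalIdeal A)
    (g : Type*) [LieRing g] [LieAlgebra ℂ g] [FiniteDimensional ℂ g]
    (rho : g →ₗ⁅ℂ⁆ Derivation ℂ A A)
    (hcont : ∀ X : g, Continuous (rho X))
    (chi : Module.Dual ℂ g →ₗ[ℂ] A)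
    (hdense : Dense ((Algebra.adjoin ℂ (Set.range chi) : Subalgebra ℂ A) : Set A))
    (hchi : ∀ (X : g) (om : Module.Dual ℂ g),
      rho X (chi om) - algebraMap ℂ A (om X) ∈ IsLocalRing.maximalIdeal A)
    (M : Type*) [AddCommGroup M] [Module A M] [Module ℂ M] [IsScalarTower ℂ A M]
    [TopologicalSpace M] [T2Space M] [ContinuousAdd M] [ContinuousSMul A M]
    (D : Derivation ℂ A M) (hD : Continuous D) :
    ∃ φ : (g →ₗ[ℂ] A) →ₗ[A] M,
      (∀ a : A, φ (lieD0 rho a) = D a) ∧ Continuous φ ∧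
      ∀ ψ : (g →ₗ[ℂ] A) →ₗ[A] M, (∀ a : A, ψ (lieD0 rho a) = D a) → ψ = φ := by
  classical
  set n := Module.finrank ℂ g with hn
  set b : Module.Basis (Fin n) ℂ g := Module.finBasis ℂ g with hbdef
  set ω : Module.Basis (Fin n) ℂ (Module.Dual ℂ g) := b.dualBasis with hωdef
  set G : Matrix (Fin n) (Fin n) A :=
    Matrix.of (fun i j => rho (b i) (chi (ω j))) with hGdef
  -- eps of G is identity matrix
  have hepsG : G.map (eps : A →+* ℂ) = 1 := by
    ext i j
    have h1 : rho (b i) (chi (ω j)) - algebraMap ℂ A (ω j (b i))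
        ∈ RingHom.ker (eps : A →+* ℂ) := by
      rw [hker]; exact hchi (b i) (ω j)
    have h2 : (eps : A →+* ℂ) (rho (b i) (chi (ω j))) = ω j (b i) := by
      have h0 := RingHom.mem_ker.mp h1
      rw [map_sub] at h0
      have h3 : (eps : A →+* ℂ) (algebraMap ℂ A (ω j (b i))) = ω j (b i) := eps.commutes _
      rw [h3] at h0
      exact sub_eq_zero.mp h0
    simp only [Matrix.map_apply, Matrix.one_apply, hGdef, Matrix.of_apply]
    rw [h2, hωdef, b.dualBasis_apply_self]
  have hdet : IsUnit G.det := by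
    by_contra h
    have hm : G.det ∈ IsLocalRing.maximalIdeal A :=
      (IsLocalRing.mem_maximalIdeal _).mpr h
    rw [← hker] at hm
    have h0 : (eps : A →+* ℂ) G.det = 0 := RingHom.mem_ker.mp hm
    rw [RingHom.map_det, RingHom.mapMatrix_apply] at h0
    rw [show G.map (eps : A →+* ℂ) = 1 from hepsG, Matrix.det_one] at h0
    exact one_ne_zero h0
  have hGG : G * G⁻¹ = 1 := Matrix.mul_nonsing_inv G hdet
  have hGG' : G⁻¹ * G = 1 := Matrix.nonsing_inv_mul G hdet
  set m : Fin n → M := fun j => D (chi (ω j)) with hmdef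
  set c : (g →ₗ[ℂ] A) → Fin n → A := fun T j => ∑ i, G⁻¹ j i * T (b i) with hcdef
  set φ : (g →ₗ[ℂ] A) →ₗ[A] M :=
    { toFun := fun T => ∑ j, c T j • m j
      map_add' := fun T S => by
        simp [hcdef, mul_add, add_smul, Finset.sum_add_distrib]
      map_smul' := fun a T => by
        simp [hcdef, Finset.smul_sum, smul_smul, Finset.mul_sum, mul_left_comm,
          smul_eq_mul] } with hφdef
  have happ : ∀ T, φ T = ∑ j, c T j • m j := fun T => rfl
  have hlie : ∀ (a : A) (X : g), lieD0 rho a X = rho X a := fun a X => rfl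
  have hφd0basis : ∀ k, φ (lieD0 rho (chi (ω k))) = m k := by
    intro k
    have hck : ∀ j, c (lieD0 rho (chi (ω k))) j = (G⁻¹ * G) j k := by
      intro j
      simp [hcdef, Matrix.mul_apply, hlie, hGdef]
    rw [happ, Finset.sum_congr rfl fun j _ => by rw [hck j, hGG']]
    simp [Matrix.one_apply]
  have hexp : ∀ T : g →ₗ[ℂ] A, T = ∑ j, c T j • lieD0 rho (chi (ω j)) := by
    intro T
    refine b.ext fun k => ?_
    have : (∑ j, c T j • lieD0 rho (chi (ω j))) (b k) = T (b k) := by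
      calc (∑ j, c T j • lieD0 rho (chi (ω j))) (b k)
          = ∑ j, c T j * G k j := by
            rw [LinearMap.sum_apply]
            exact Finset.sum_congr rfl fun j _ => by
              rw [LinearMap.smul_apply, smul_eq_mul]; rfl
        _ = ∑ i, (∑ j, G k j * G⁻¹ j i) * T (b i) := by
            simp only [hcdef, Finset.sum_mul]
            rw [Finset.sum_comm]
            exact Finset.sum_congr rfl fun i _ =>
              Finset.sum_congr rfl fun j _ => by ring
        _ = ∑ i, (1 : Matrix (Fin n) (Fin n) A) k i * T (b i) := by
            rw [← hGG]
            exact Finset.sum_congr rfl fun i _ => by rw [Matrix.mul_apply]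
        _ = T (b k) := by simp [Matrix.one_apply]
    exact this.symm
  -- d0 as a ℂ-linear map
  set d0 : A →ₗ[ℂ] (g →ₗ[ℂ] A) :=
    { toFun := lieD0 rho
      map_add' := fun x y => by ext X; simp [hlie]
      map_smul' := fun r x => by ext X; simp [hlie] } with hd0def
  have hωeq : ∀ om : Module.Dual ℂ g, φ (lieD0 rho (chi om)) = D (chi om) := by
    have key : ((φ.restrictScalars ℂ).comp (d0.comp chi)) = D.toLinearMap.comp chi := by
      refine ω.ext fun j => ?_
      simp only [LinearMap.comp_apply, LinearMap.restrictScalars_apply]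
      exact hφd0basis j
    exact fun om => LinearMap.congr_fun key om
  have hadj : ∀ a ∈ Algebra.adjoin ℂ (Set.range chi), φ (lieD0 rho a) = D a := by
    intro a ha
    induction ha using Algebra.adjoin_induction with
    | mem x hx =>
        obtain ⟨om, rfl⟩ := hx
        exact hωeq om
    | algebraMap r =>
        have h1 : lieD0 rho (algebraMap ℂ A r) = 0 := by
          ext X; simp [hlie]
        rw [h1, map_zero, Derivation.map_algebraMap]
    | add x y hx hy ihx ihy =>
        have h1 : lieD0 rho (x + y) = lieD0 rho x + lieD0 rho y := by
          ext X; simp [hlie]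
        rw [h1, map_add, ihx, ihy, map_add]
    | mul x y hx hy ihx ihy =>
        have h1 : lieD0 rho (x * y) = x • lieD0 rho y + y • lieD0 rho x := by
          ext X
          simp [hlie, smul_eq_mul]
        rw [h1, map_add, map_smul, map_smul, ihx, ihy, D.leibniz]
  have hev : ∀ X : g, Continuous fun T : g →ₗ[ℂ] A => T X :=
    fun X => (continuous_apply X).comp continuous_induced_dom
  have hφcont : Continuous φ := by
    have : Continuous fun T : g →ₗ[ℂ] A => ∑ j, c T j • m j := by
      refine continuous_finset_sum _ fun j _ => Continuous.smul ?_ continuous_const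
      exact continuous_finset_sum _ fun i _ => continuous_const.mul (hev (b i))
    exact this
  have hd0c : Continuous fun a : A => lieD0 rho a := by
    rw [continuous_induced_rng]
    exact continuous_pi fun X => hcont X
  have hall : ∀ a : A, φ (lieD0 rho a) = D a := by
    have hfc : Continuous fun a : A => φ (lieD0 rho a) := hφcont.comp hd0c
    have heq := Continuous.ext_on hdense hfc hD fun a ha => hadj a ha
    exact fun a => congrFun heq a
  have key : ∀ (θ : (g →ₗ[ℂ] A) →ₗ[A] M), (∀ a, θ (lieD0 rho a) = D a) →
      ∀ T, θ T = ∑ j, c T j • D (chi (ω j)) := by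
    intro θ hθ T
    conv_lhs => rw [hexp T]
    rw [map_sum]
    exact Finset.sum_congr rfl fun j _ => by rw [map_smul, hθ]
  refine ⟨φ, hall, hφcont, ?_⟩
  intro ψ hψ
  ext T
  rw [key ψ hψ T, key φ hall T]
end
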